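/- Let F(n, L^{(r)}_{ℓ₁,…,ℓ_r}) denote the largest cardinality of an L^{(r)}_{ℓ₁,…,ℓ_r}-free subset of {1,…,n}. For r ≥ 2 and 2 ≤ ℓ₁ ≤ ⋯ ≤ ℓ_r, writing F_r = F(n, L^{(r)}_{ℓ₁,…,ℓ_r}) and F_{r−1} = F(n, L^{(r−1)}_{ℓ₂,…,ℓ_r}), one has F_r < (2n)^{1−1/ℓ₁} · F_{r−1}^{1/ℓ₁} + 2ℓ₁. -/

import Mathlib

open Pointwise

/-- `A ⊆ G` is `L^{(r)}_{ℓ₁,…,ℓ_r}`-free. -/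
def LFree {G : Type*} [AddCommGroup G] [DecidableEq G] (r : ℕ) (ℓ : Fin r → ℕ)
    (A : Set G) : Prop :=
  ∀ L : Fin r → Finset G, (∀ i, (L i).card = ℓ i) → ¬ ((↑(∑ i, L i) : Set G) ⊆ A)

/-- `F(n, L^{(r)}_{ℓ₁,…,ℓ_r})`: largest size of an `L^{(r)}_{ℓ₁,…,ℓ_r}`-free subset
of `{1,…,n}`. -/
noncomputable def Ffin (n r : ℕ) (ℓ : Fin r → ℕ) : ℕ :=
  sSup {k | ∃ A : Finset ℤ, (↑A : Set ℤ) ⊆ Set.Icc (1 : ℤ) n ∧ LFree r ℓ (A : Set ℤ) ∧ A.card = k}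

lemma ffin_bdd (n r : ℕ) (ℓ : Fin r → ℕ) :
    BddAbove {k | ∃ A : Finset ℤ, (↑A : Set ℤ) ⊆ Set.Icc (1 : ℤ) n ∧ LFree r ℓ (A : Set ℤ) ∧
      A.card = k} := by
  refine ⟨n, ?_⟩
  rintro k ⟨A, hA, -, rfl⟩
  have hsub : A ⊆ Finset.Icc (1 : ℤ) n := by
    rw [← Finset.coe_subset, Finset.coe_Icc]; exact hA
  calc A.card ≤ (Finset.Icc (1 : ℤ) n).card := Finset.card_le_card hsub
    _ = n := by rw [Int.card_Icc]; omega

lemma lfree_empty (r : ℕ) (ℓ : Fin r → ℕ) (hℓ : ∀ i, 1 ≤ ℓ i) :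
    LFree r ℓ ((∅ : Finset ℤ) : Set ℤ) := by
  intro L hL hsub
  have hne : ∀ i, (L i).Nonempty := fun i => Finset.card_pos.mp (by rw [hL i]; exact hℓ i)
  choose g hg using hne
  have hmem : (∑ i, g i) ∈ ((∑ i, L i : Finset ℤ) : Set ℤ) := by
    rw [Finset.coe_sum]
    exact (Set.mem_fintype_sum _ _).mpr ⟨g, fun i => hg i, rfl⟩
  simpa using hsub hmem

theorem stmt6 (n m : ℕ) (ℓ : Fin (m + 2) → ℕ) (hℓ : ∀ i, 2 ≤ ℓ i) (hmono : Monotone ℓ) :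
    (Ffin n (m + 2) ℓ : ℝ)
      < (2 * n : ℝ) ^ (1 - 1 / (ℓ 0 : ℝ)) *
          (Ffin n (m + 1) (fun i => ℓ i.succ) : ℝ) ^ (1 / (ℓ 0 : ℝ))
        + 2 * (ℓ 0 : ℝ) := by
  classical
  set l := ℓ 0 with hldef
  have hl2 : 2 ≤ l := hℓ 0
  set F := Ffin n (m + 2) ℓ with hFdef
  set F' := Ffin n (m + 1) (fun i => ℓ i.succ) with hF'def
  have hterm : 0 ≤ (2 * n : ℝ) ^ (1 - 1 / (l : ℝ)) * (F' : ℝ) ^ (1 / (l : ℝ)) := by positivity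
  by_cases hsmall : F < 2 * l
  · have : (F : ℝ) < 2 * l := by exact_mod_cast
      (by exact_mod_cast hsmall : (F : ℝ) < ((2 * l : ℕ) : ℝ))
    push_cast at this
    linarith
  push_neg at hsmall
  -- the extremal set A
  have hFmem : F ∈ {k | ∃ A : Finset ℤ, (↑A : Set ℤ) ⊆ Set.Icc (1 : ℤ) n ∧
      LFree (m + 2) ℓ (A : Set ℤ) ∧ A.card = k} := by
    refine Nat.sSup_mem ⟨0, ∅, by simp, lfree_empty _ _ (fun i => le_trans one_le_two (hℓ i)), by
      simp⟩ (ffin_bdd n (m + 2) ℓ)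
  obtain ⟨A, hAsub, hAfree, hAcard⟩ := hFmem
  have hAbounds : ∀ x ∈ A, 1 ≤ x ∧ x ≤ (n : ℤ) := by
    intro x hx
    have := hAsub (Finset.mem_coe.mpr hx)
    exact Set.mem_Icc.mp this
  -- translation sets
  set B : Finset ℤ → Finset ℤ := fun P => A.filter (fun x => ∀ a ∈ P, a + x ∈ A) with hBdef
  -- each B P (for 0 ∈ P, |P| = l) has card ≤ F'
  have hBcard : ∀ P : Finset ℤ, P.card = l → ∀ Q : Finset ℤ, Q ⊆ B P → Q.card ≤ F' := by
    intro P hPcard Q hQ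
    have hQA : Q ⊆ A := hQ.trans (Finset.filter_subset _ _)
    refine le_csSup (ffin_bdd n (m + 1) (fun i => ℓ i.succ)) ⟨Q, ?_, ?_, rfl⟩
    · exact fun x hx => hAsub (Finset.mem_coe.mpr (hQA (Finset.mem_coe.mp hx)))
    · intro L' hL' hsub'
      refine hAfree (Fin.cons P L') ?_ ?_
      · intro i
        refine Fin.cases ?_ ?_ i
        · simpa using hPcard
        · intro j; simpa using hL' j
      · rw [Fin.sum_cons]
        intro z hz
        rw [Finset.mem_coe, Finset.mem_add] at hz
        obtain ⟨a, ha, s, hs, rfl⟩ := hz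
        have hsB : s ∈ B P := hQ (hsub' (Finset.mem_coe.mpr hs))
        have := (Finset.mem_filter.mp hsB).2 a ha
        exact Finset.mem_coe.mpr this
  -- in fact each B P itself has card ≤ F'
  have hBcard' : ∀ P : Finset ℤ, P.card = l → (B P).card ≤ F' :=
    fun P hP => hBcard P hP (B P) (le_refl _)
  -- patterns
  set patterns : Finset (Finset ℤ) :=
    ((Finset.Icc (0 : ℤ) ((n : ℤ) - 1)).powersetCard l).filter (fun P => 0 ∈ P) with hpatdef
  -- the min-extraction function
  set mn : Finset ℤ → ℤ := fun S => if h : S.Nonempty then S.min' h else 0 with hmndef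
  -- injection from powersetCard l A into the sigma set
  have hinj : (A.powersetCard l).card ≤ (patterns.sigma fun P => B P).card := by
    refine Finset.card_le_card_of_injOn
      (fun S => ⟨S.image (fun s => s - mn S), mn S⟩) ?_ ?_
    · intro S hS
      rw [Finset.mem_coe, Finset.mem_powersetCard] at hS
      obtain ⟨hSA, hScard⟩ := hS
      have hSne : S.Nonempty := Finset.card_pos.mp (by rw [hScard]; omega)
      have hmn : mn S = S.min' hSne := dif_pos hSne
      have hminS : S.min' hSne ∈ S := S.min'_mem hSne
      rw [Finset.mem_coe, Finset.mem_sigma]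
      dsimp only
      constructor
      · rw [hpatdef, Finset.mem_filter, Finset.mem_powersetCard]
        refine ⟨⟨?_, ?_⟩, ?_⟩
        · intro a ha
          rw [Finset.mem_image] at ha
          obtain ⟨s, hs, rfl⟩ := ha
          obtain ⟨hs1, hs2⟩ := hAbounds s (hSA hs)
          obtain ⟨hm1, hm2⟩ := hAbounds _ (hSA hminS)
          have hle : S.min' hSne ≤ s := S.min'_le s hs
          rw [Finset.mem_Icc, hmn]
          omega
        · rw [Finset.card_image_of_injective _ (sub_left_injective), hScard]
        · rw [Finset.mem_image]
          exact ⟨S.min' hSne, hminS, by rw [hmn, sub_self]⟩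
      · simp only [hBdef, Finset.mem_filter]
        constructor
        · rw [hmn]; exact hSA hminS
        
        · intro a ha
          rw [Finset.mem_image] at ha
          obtain ⟨s, hs, rfl⟩ := ha
          have hz : s - mn S + mn S = s := by ring
          rw [hz]
          exact hSA hs
    · intro S₁ h₁ S₂ h₂ heq
      have key : ∀ S : Finset ℤ,
          (S.image (fun s => s - mn S)).image (fun a => a + mn S) = S := by
        intro S
        rw [Finset.image_image]
        have : ((fun a => a + mn S) ∘ fun s => s - mn S) = id := by
          funext s; simp
        rw [this, Finset.image_id]
      have h1' : (⟨S₁.image (fun s => s - mn S₁), mn S₁⟩ : Σ _ : Finset ℤ, ℤ)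
          = ⟨S₂.image (fun s => s - mn S₂), mn S₂⟩ := heq
      obtain ⟨hfst, hsnd⟩ := Sigma.mk.inj_iff.mp h1'
      have hsnd' : mn S₁ = mn S₂ := eq_of_heq hsnd
      calc S₁ = (S₁.image (fun s => s - mn S₁)).image (fun a => a + mn S₁) := (key S₁).symm
        _ = (S₂.image (fun s => s - mn S₂)).image (fun a => a + mn S₂) := by rw [hfst, hsnd']
        _ = S₂ := key S₂
  -- bound patterns.card
  have hpat : patterns.card ≤ (n - 1).choose (l - 1) := by
    have := Finset.card_le_card_of_injOn (fun P => P.erase 0)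
      (s := patterns) (t := (Finset.Icc (1 : ℤ) ((n : ℤ) - 1)).powersetCard (l - 1)) ?_ ?_
    · refine this.trans ?_
      rw [Finset.card_powersetCard, Int.card_Icc]
      have : ((n : ℤ) - 1 + 1 - 1).toNat = n - 1 := by omega
      rw [this]
    · intro P hP
      rw [hpatdef, Finset.mem_coe, Finset.mem_filter, Finset.mem_powersetCard] at hP
      obtain ⟨⟨hPsub, hPcard⟩, hP0⟩ := hP
      rw [Finset.mem_coe, Finset.mem_powersetCard]
      constructor
      · intro a ha
        rw [Finset.mem_erase] at ha
        have := hPsub ha.2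
        rw [Finset.mem_Icc] at *
        have := ha.1
        omega
      · rw [Finset.card_erase_of_mem hP0, hPcard]
    · intro P₁ h₁ P₂ h₂ heq
      rw [hpatdef, Finset.mem_coe, Finset.mem_filter] at h₁ h₂
      have e1 : insert (0 : ℤ) (P₁.erase 0) = P₁ := Finset.insert_erase h₁.2
      have e2 : insert (0 : ℤ) (P₂.erase 0) = P₂ := Finset.insert_erase h₂.2
      have heq' : P₁.erase 0 = P₂.erase 0 := heq
      rw [← e1, ← e2, heq']
  -- the choose inequality
  have h1 : F.choose l ≤ (n - 1).choose (l - 1) * F' := by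
    have hc : (A.powersetCard l).card = F.choose l := by
      rw [Finset.card_powersetCard, hAcard]
    calc F.choose l = (A.powersetCard l).card := hc.symm
      _ ≤ (patterns.sigma fun P => B P).card := hinj
      _ = ∑ P ∈ patterns, (B P).card := Finset.card_sigma _ _
      _ ≤ patterns.card * F' := by
          rw [← smul_eq_mul]
          refine Finset.sum_le_card_nsmul _ _ _ ?_
          intro P hP
          rw [hpatdef, Finset.mem_filter, Finset.mem_powersetCard] at hP
          exact hBcard' P hP.1.2
      _ ≤ (n - 1).choose (l - 1) * F' := Nat.mul_le_mul_right _ hpat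
  -- the key nat inequality
  have hl1 : 1 ≤ l := by omega
  have key : (F + 1 - l) ^ l ≤ (2 * n) ^ (l - 1) * F' := by
    have hlpow : l ≤ 2 ^ (l - 1) := by
      have h := Nat.lt_two_pow_self (n := l - 1)
      calc l = (l - 1) + 1 := by omega
        _ ≤ 2 ^ (l - 1) := h
    calc (F + 1 - l) ^ l ≤ F.descFactorial l := Nat.pow_sub_le_descFactorial F l
      _ = (Nat.factorial l) * F.choose l := Nat.descFactorial_eq_factorial_mul_choose F l
      _ ≤ (Nat.factorial l) * ((n - 1).choose (l - 1) * F') := Nat.mul_le_mul_left _ h1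
      _ = l * (Nat.factorial (l - 1) * (n - 1).choose (l - 1)) * F' := by
          have : Nat.factorial l = l * Nat.factorial (l - 1) := by
            conv_lhs => rw [show l = (l - 1) + 1 by omega]
            rw [Nat.factorial_succ]
            congr 1
            omega
          rw [this]; ring
      _ = l * (n - 1).descFactorial (l - 1) * F' := by
          rw [← Nat.descFactorial_eq_factorial_mul_choose]
      _ ≤ 2 ^ (l - 1) * n ^ (l - 1) * F' := by
          have h2 : (n - 1).descFactorial (l - 1) ≤ n ^ (l - 1) :=
            (Nat.descFactorial_le_pow _ _).trans (Nat.pow_le_pow_left (Nat.sub_le n 1) _)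
          exact Nat.mul_le_mul (Nat.mul_le_mul hlpow h2) (le_refl _)
      _ = (2 * n) ^ (l - 1) * F' := by rw [mul_pow]
  -- move to the reals
  set a : ℕ := F + 1 - l with hadef
  have hlne : (l : ℝ) ≠ 0 := by
    have : (0 : ℝ) < l := by exact_mod_cast (by omega : 0 < l)
    exact ne_of_gt this
  have castkey : ((a : ℝ)) ^ (l : ℕ) ≤ ((2 * n : ℕ) : ℝ) ^ ((l - 1 : ℕ) : ℕ) * (F' : ℝ) := by
    have := key
    have : ((a ^ l : ℕ) : ℝ) ≤ (((2 * n) ^ (l - 1) * F' : ℕ) : ℝ) := Nat.cast_le.mpr this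
    push_cast at this
    push_cast
    linarith
  have haux : (a : ℝ) ≤ (((2 * n : ℕ) : ℝ) ^ ((l - 1 : ℕ) : ℕ) * (F' : ℝ)) ^ (1 / (l : ℝ)) := by
    have h0 : (0 : ℝ) ≤ (a : ℝ) := Nat.cast_nonneg a
    have hc0 : (0 : ℝ) ≤ ((2 * n : ℕ) : ℝ) ^ ((l - 1 : ℕ) : ℕ) * (F' : ℝ) := by positivity
    have hmono' := Real.rpow_le_rpow (by positivity) castkey
      (by positivity : (0:ℝ) ≤ 1 / (l : ℝ))
    rwa [← Real.rpow_natCast (a : ℝ) l, ← Real.rpow_mul h0, mul_one_div,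
      div_self hlne, Real.rpow_one] at hmono'
  -- split the rpow of the product
  have hsplit : (((2 * n : ℕ) : ℝ) ^ ((l - 1 : ℕ) : ℕ) * (F' : ℝ)) ^ (1 / (l : ℝ))
      = (2 * n : ℝ) ^ (1 - 1 / (l : ℝ)) * (F' : ℝ) ^ (1 / (l : ℝ)) := by
    rw [Real.mul_rpow (by positivity) (Nat.cast_nonneg F')]
    congr 1
    rw [← Real.rpow_natCast (((2 * n : ℕ) : ℝ)) (l - 1), ← Real.rpow_mul (by positivity)]
    have hcast : ((2 * n : ℕ) : ℝ) = (2 * n : ℝ) := by push_cast; ring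
    rw [hcast]
    congr 1
    have hl1' : (((l - 1 : ℕ)) : ℝ) = (l : ℝ) - 1 := by
      push_cast [Nat.cast_sub hl1]
      ring
    rw [hl1', mul_one_div, sub_div, div_self hlne, one_div]
  rw [hsplit] at haux
  -- conclude
  have hFa : (F : ℝ) = (a : ℝ) + (l : ℝ) - 1 := by
    have : F + 1 = a + l := by omega
    have := congrArg (fun k : ℕ => (k : ℝ)) this
    push_cast at this
    linarith
  have hlR : (2 : ℝ) ≤ (l : ℝ) := by exact_mod_cast hl2
  calc (F : ℝ) = (a : ℝ) + (l : ℝ) - 1 := hFa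
    _ ≤ (2 * n : ℝ) ^ (1 - 1 / (l : ℝ)) * (F' : ℝ) ^ (1 / (l : ℝ)) + (l : ℝ) - 1 := by
        linarith
    _ < (2 * n : ℝ) ^ (1 - 1 / (l : ℝ)) * (F' : ℝ) ^ (1 / (l : ℝ)) + 2 * (l : ℝ) := by
        linarith
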